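/- Let d ≠ 0, f, ζ ∈ ℝ and let a ∈ C²([0,2π], ℝ²) be a 2π-periodic solution of the stationary Lugiato-Lefever system. Then the derivative satisfies |d| ‖a'‖_{L²} ≤ 6π f² ‖a‖_{L²}, and in particular |d| ‖a'‖_{L²} ≤ 6√2 π^{3/2} |f|³. -/

import Mathlib

open Real intervalIntegral MeasureTheory

lemma discrim_aux' {A B C : ℝ} (hC : 0 ≤ C)
    (h : ∀ l : ℝ, 0 ≤ A + 2 * l * B + l ^ 2 * C) : B ^ 2 ≤ A * C := by
  rcases eq_or_lt_of_le hC with hC0 | hC0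
  · by_cases hB : B = 0
    · simp [hB, ← hC0]
    · have h1 := h ((-A - 1) / (2 * B))
      rw [← hC0] at h1
      have h2 : (-A - 1) / (2 * B) * (2 * B) = -A - 1 :=
        div_mul_cancel₀ _ (by simpa using hB)
      nlinarith [h1, h2]
  · have h1 := h (-B / C)
    have h2 : -B / C * C = -B := div_mul_cancel₀ _ (ne_of_gt hC0)
    nlinarith [mul_nonneg hC0.le h1, h2]

lemma cs_int' (u v : ℝ → ℝ) (hu : Continuous u) (hv : Continuous v) :
    (∫ x in (0:ℝ)..(2*π), u x * v x)
      ≤ Real.sqrt (∫ x in (0:ℝ)..(2*π), u x ^ 2)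
        * Real.sqrt (∫ x in (0:ℝ)..(2*π), v x ^ 2) := by
  have hle : (0:ℝ) ≤ 2 * π := by positivity
  set A := ∫ x in (0:ℝ)..(2*π), u x ^ 2 with hA
  set B := ∫ x in (0:ℝ)..(2*π), u x * v x with hB
  set C := ∫ x in (0:ℝ)..(2*π), v x ^ 2 with hC
  have hAnn : 0 ≤ A := intervalIntegral.integral_nonneg hle (fun x _ => sq_nonneg _)
  have hCnn : 0 ≤ C := intervalIntegral.integral_nonneg hle (fun x _ => sq_nonneg _)
  have key : ∀ l : ℝ, 0 ≤ A + 2 * l * B + l ^ 2 * C := by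
    intro l
    have h0 : 0 ≤ ∫ x in (0:ℝ)..(2*π), (u x + l * v x) ^ 2 :=
      intervalIntegral.integral_nonneg hle (fun x _ => sq_nonneg _)
    have hexp : (∫ x in (0:ℝ)..(2*π), (u x + l * v x) ^ 2)
        = A + 2 * l * B + l ^ 2 * C := by
      have h1 : Set.EqOn (fun x => (u x + l * v x) ^ 2)
          (fun x => u x ^ 2 + (2 * l) * (u x * v x) + l ^ 2 * v x ^ 2)
          (Set.uIcc (0:ℝ) (2*π)) := fun x _ => by ring
      rw [intervalIntegral.integral_congr h1,
        intervalIntegral.integral_add (f := fun x => u x ^ 2 + 2 * l * (u x * v x))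
          (g := fun x => l ^ 2 * v x ^ 2) (((hu.pow 2).add
          (continuous_const.mul (hu.mul hv))).intervalIntegrable _ _)
          ((continuous_const.mul (hv.pow 2)).intervalIntegrable _ _),
        intervalIntegral.integral_add (f := fun x => u x ^ 2)
          (g := fun x => 2 * l * (u x * v x)) ((hu.pow 2).intervalIntegrable _ _)
          ((continuous_const.mul (hu.mul hv)).intervalIntegrable _ _),
        intervalIntegral.integral_const_mul, intervalIntegral.integral_const_mul]
    linarith [hexp ▸ h0]
  have hfin := discrim_aux' hCnn key
  calc B ≤ |B| := le_abs_self B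
    _ = Real.sqrt (B ^ 2) := (Real.sqrt_sq_eq_abs B).symm
    _ ≤ Real.sqrt (A * C) := Real.sqrt_le_sqrt hfin
    _ = Real.sqrt A * Real.sqrt C := Real.sqrt_mul hAnn C

set_option maxHeartbeats 1000000 in
theorem stmt_2 (d ζ f : ℝ) (hd : d ≠ 0) (a1 a2 : ℝ → ℝ)
    (ha1 : ContDiff ℝ 2 a1) (ha2 : ContDiff ℝ 2 a2)
    (hp1 : Function.Periodic a1 (2 * π)) (hp2 : Function.Periodic a2 (2 * π))
    (heq1 : ∀ x, -d * deriv (deriv a1) x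
      = -(a2 x) - ζ * a1 x + (a1 x ^ 2 + a2 x ^ 2) * a1 x)
    (heq2 : ∀ x, -d * deriv (deriv a2) x
      = a1 x - ζ * a2 x + (a1 x ^ 2 + a2 x ^ 2) * a2 x - f) :
    |d| * Real.sqrt (∫ x in (0:ℝ)..(2 * π), (deriv a1 x ^ 2 + deriv a2 x ^ 2))
      ≤ 6 * π * f ^ 2 * Real.sqrt (∫ x in (0:ℝ)..(2 * π), (a1 x ^ 2 + a2 x ^ 2)) ∧
    |d| * Real.sqrt (∫ x in (0:ℝ)..(2 * π), (deriv a1 x ^ 2 + deriv a2 x ^ 2))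
      ≤ 6 * Real.sqrt 2 * π ^ ((3:ℝ)/2) * |f| ^ 3 := by
  have h2pi : (0:ℝ) ≤ 2 * π := by positivity
  have hcd1 : ContDiff ℝ 1 (deriv a1) :=
    ((contDiff_succ_iff_deriv (n := 1)).mp (by exact_mod_cast ha1)).2.2
  have hcd2 : ContDiff ℝ 1 (deriv a2) :=
    ((contDiff_succ_iff_deriv (n := 1)).mp (by exact_mod_cast ha2)).2.2
  set b1 := deriv a1 with hb1d
  set b2 := deriv a2 with hb2d
  set c1 := deriv b1 with hc1d
  set c2 := deriv b2 with hc2d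
  have ca1 : Continuous a1 := ha1.continuous
  have ca2 : Continuous a2 := ha2.continuous
  have cb1 : Continuous b1 := hcd1.continuous
  have cb2 : Continuous b2 := hcd2.continuous
  have cc1 : Continuous c1 := hcd1.continuous_deriv le_rfl
  have cc2 : Continuous c2 := hcd2.continuous_deriv le_rfl
  have da1 : ∀ x, HasDerivAt a1 (b1 x) x := fun x =>
    ((ha1.differentiable (by norm_num)) x).hasDerivAt
  have da2 : ∀ x, HasDerivAt a2 (b2 x) x := fun x =>
    ((ha2.differentiable (by norm_num)) x).hasDerivAt
  have db1 : ∀ x, HasDerivAt b1 (c1 x) x := fun x =>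
    ((hcd1.differentiable (by norm_num)) x).hasDerivAt
  have db2 : ∀ x, HasDerivAt b2 (c2 x) x := fun x =>
    ((hcd2.differentiable (by norm_num)) x).hasDerivAt
  have hper : ∀ (g : ℝ → ℝ), Function.Periodic g (2*π) →
      Function.Periodic (deriv g) (2*π) := by
    intro g hg x
    have h : (fun y => g (y + 2*π)) = g := funext hg
    rw [← deriv_comp_add_const, h]
  have hpb1 : Function.Periodic b1 (2*π) := hper a1 hp1
  have hpb2 : Function.Periodic b2 (2*π) := hper a2 hp2
  have pa1 : a1 (2*π) = a1 0 := by simpa using hp1 0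
  have pa2 : a2 (2*π) = a2 0 := by simpa using hp2 0
  have pb1 : b1 (2*π) = b1 0 := by simpa using hpb1 0
  have pb2 : b2 (2*π) = b2 0 := by simpa using hpb2 0
  set g : ℝ → ℝ := fun x => a1 x ^ 2 + a2 x ^ 2 - f * a1 x with hgdef
  have cg : Continuous g :=
    ((ca1.pow 2).add (ca2.pow 2)).sub (continuous_const.mul ca1)
  -- Step A : ∫ g = 0
  have hwD : ∀ x, HasDerivAt (fun y => d * (a2 y * b1 y - a1 y * b2 y)) (g x) x := by
    intro x
    have h := (((da2 x).mul (db1 x)).sub ((da1 x).mul (db2 x))).const_mul d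
    refine h.congr_deriv (Eq.symm ?_)
    have e1 := heq1 x
    have e2 := heq2 x
    simp only [hgdef]
    linear_combination (a2 x) * e1 - (a1 x) * e2
  have hg0 : (∫ x in (0:ℝ)..(2*π), g x) = 0 := by
    rw [intervalIntegral.integral_eq_sub_of_hasDerivAt (fun x _ => hwD x)
      (cg.intervalIntegrable _ _), pa1, pa2, pb1, pb2, sub_self]
  -- F and its bound
  set F : ℝ → ℝ := fun x => ∫ t in (0:ℝ)..x, g t with hFdef
  have hFD : ∀ x, HasDerivAt F (g x) x := fun x =>
    (cg.integral_hasStrictDerivAt 0 x).hasDerivAt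
  have cF : Continuous F :=
    Differentiable.continuous (fun x => (hFD x).differentiableAt)
  have hF0 : F 0 = 0 := intervalIntegral.integral_same
  have hF2 : F (2*π) = 0 := by simp only [hFdef]; exact hg0
  have hglb : ∀ t, -(f^2/4) ≤ g t := by
    intro t; simp only [hgdef]
    nlinarith only [sq_nonneg (a1 t - f/2), sq_nonneg (a2 t)]
  have hFbound : ∀ x ∈ Set.Icc (0:ℝ) (2*π), |F x| ≤ π * f^2 / 2 := by
    rintro x ⟨hx0, hx2⟩
    have hi1 : IntervalIntegrable g volume 0 x := cg.intervalIntegrable _ _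
    have hi2 : IntervalIntegrable g volume x (2*π) := cg.intervalIntegrable _ _
    have hsplit : F x + (∫ t in x..(2*π), g t) = 0 := by
      simp only [hFdef]
      rw [intervalIntegral.integral_add_adjacent_intervals hi1 hi2]
      exact hg0
    have h1 : (∫ t in (0:ℝ)..x, (-(f^2/4) : ℝ)) ≤ F x :=
      intervalIntegral.integral_mono_on hx0 intervalIntegrable_const hi1
        (fun t _ => hglb t)
    have h2 : (∫ t in x..(2*π), (-(f^2/4) : ℝ)) ≤ ∫ t in x..(2*π), g t :=
      intervalIntegral.integral_mono_on hx2 intervalIntegrable_const hi2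
        (fun t _ => hglb t)
    rw [intervalIntegral.integral_const, smul_eq_mul] at h1 h2
    rw [abs_le]
    constructor
    · nlinarith only [sq_nonneg f, h1, hx0, hx2, hsplit, Real.pi_pos.le]
    · nlinarith only [sq_nonneg f, h2, hx0, hx2, hsplit, Real.pi_pos.le]
  -- named integrals
  set A1 : ℝ := ∫ x in (0:ℝ)..(2*π), a1 x with hA1
  set A2 : ℝ := ∫ x in (0:ℝ)..(2*π), a2 x with hA2
  set S : ℝ := ∫ x in (0:ℝ)..(2*π), (a1 x ^ 2 + a2 x ^ 2) with hS
  set T : ℝ := ∫ x in (0:ℝ)..(2*π), (a1 x ^ 2 + a2 x ^ 2) * a1 x with hT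
  set Q : ℝ := ∫ x in (0:ℝ)..(2*π), (a1 x ^ 2 + a2 x ^ 2) ^ 2 with hQ
  set X2 : ℝ := ∫ x in (0:ℝ)..(2*π), (b1 x ^ 2 + b2 x ^ 2) with hX2
  have hSnn : 0 ≤ S := by
    rw [hS]; exact intervalIntegral.integral_nonneg h2pi (fun x _ => by positivity)
  have hX2nn : 0 ≤ X2 := by
    rw [hX2]; exact intervalIntegral.integral_nonneg h2pi (fun x _ => by positivity)
  -- (E) S = f * A1
  have hE : S = f * A1 := by
    have hsub : (∫ x in (0:ℝ)..(2*π), g x)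
        = (∫ x in (0:ℝ)..(2*π), (a1 x ^ 2 + a2 x ^ 2))
          - f * ∫ x in (0:ℝ)..(2*π), a1 x := by
      simp only [hgdef]
      rw [intervalIntegral.integral_sub (f := fun x => a1 x ^ 2 + a2 x ^ 2) (g := fun x => f * a1 x)
        (((ca1.pow 2).add (ca2.pow 2)).intervalIntegrable _ _)
        ((continuous_const.mul ca1).intervalIntegrable _ _),
        intervalIntegral.integral_const_mul]
    rw [← hS, ← hA1] at hsub
    linarith only [hg0, hsub]
  -- (D)
  have hftc1 : (∫ x in (0:ℝ)..(2*π), c1 x) = 0 := by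
    rw [intervalIntegral.integral_eq_sub_of_hasDerivAt (fun x _ => db1 x)
      (cc1.intervalIntegrable _ _), pb1, sub_self]
  have hD : -A2 - ζ * A1 + T = 0 := by
    have hcongr : (∫ x in (0:ℝ)..(2*π),
        (-(a2 x) - ζ * a1 x + (a1 x ^ 2 + a2 x ^ 2) * a1 x))
        = ∫ x in (0:ℝ)..(2*π), -d * c1 x :=
      intervalIntegral.integral_congr (fun x _ => (heq1 x).symm)
    rw [intervalIntegral.integral_const_mul, hftc1, mul_zero] at hcongr
    rw [intervalIntegral.integral_add (f := fun x => -(a2 x) - ζ * a1 x)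
        (g := fun x => (a1 x ^ 2 + a2 x ^ 2) * a1 x)
        ((ca2.neg.sub (continuous_const.mul ca1)).intervalIntegrable _ _)
        ((((ca1.pow 2).add (ca2.pow 2)).mul ca1).intervalIntegrable _ _),
      intervalIntegral.integral_sub (f := fun x => -(a2 x)) (g := fun x => ζ * a1 x)
        (ca2.neg.intervalIntegrable _ _)
        ((continuous_const.mul ca1).intervalIntegrable _ _),
      intervalIntegral.integral_neg, intervalIntegral.integral_const_mul,
      ← hA1, ← hA2, ← hT] at hcongr
    linarith only [hcongr]
  -- (C) energy identity
  have hPder : ∀ x, HasDerivAt (fun y => d * (a1 y * b1 y + a2 y * b2 y))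
      (d * (b1 x ^ 2 + b2 x ^ 2) + d * (a1 x * c1 x + a2 x * c2 x)) x := by
    intro x
    have h := (((da1 x).mul (db1 x)).add ((da2 x).mul (db2 x))).const_mul d
    refine h.congr_deriv (Eq.symm ?_)
    ring
  have hperiodP : (∫ x in (0:ℝ)..(2*π),
      (d * (b1 x ^ 2 + b2 x ^ 2) + d * (a1 x * c1 x + a2 x * c2 x))) = 0 := by
    rw [intervalIntegral.integral_eq_sub_of_hasDerivAt (fun x _ => hPder x)
      (((continuous_const.mul ((cb1.pow 2).add (cb2.pow 2))).add
        (continuous_const.mul ((ca1.mul cc1).add (ca2.mul cc2)))).intervalIntegrable _ _),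
      pa1, pa2, pb1, pb2, sub_self]
  have hC2 : d * X2 + (-Q + ζ * S + f * A2) = 0 := by
    have hcongr : (∫ x in (0:ℝ)..(2*π), (d * (a1 x * c1 x + a2 x * c2 x)))
        = ∫ x in (0:ℝ)..(2*π),
          (-((a1 x ^ 2 + a2 x ^ 2) ^ 2) + ζ * (a1 x ^ 2 + a2 x ^ 2) + f * a2 x) := by
      apply intervalIntegral.integral_congr
      intro x _
      have e1 := heq1 x
      have e2 := heq2 x
      linear_combination (-(a1 x)) * e1 - (a2 x) * e2
    rw [intervalIntegral.integral_add
        (f := fun x => -((a1 x ^ 2 + a2 x ^ 2) ^ 2) + ζ * (a1 x ^ 2 + a2 x ^ 2)) (g := fun x => f * a2 x)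
        ((((((ca1.pow 2).add (ca2.pow 2)).pow 2).neg).add
          (continuous_const.mul ((ca1.pow 2).add (ca2.pow 2)))).intervalIntegrable _ _)
        ((continuous_const.mul ca2).intervalIntegrable _ _),
      intervalIntegral.integral_add
        (f := fun x => -((a1 x ^ 2 + a2 x ^ 2) ^ 2)) (g := fun x => ζ * (a1 x ^ 2 + a2 x ^ 2))
        (((((ca1.pow 2).add (ca2.pow 2)).pow 2).neg).intervalIntegrable _ _)
        ((continuous_const.mul ((ca1.pow 2).add (ca2.pow 2))).intervalIntegrable _ _),
      intervalIntegral.integral_neg, intervalIntegral.integral_const_mul,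
      intervalIntegral.integral_const_mul, intervalIntegral.integral_const_mul,
      ← hQ, ← hS, ← hA2] at hcongr
    have hsum := hperiodP
    rw [intervalIntegral.integral_add
        (f := fun x => d * (b1 x ^ 2 + b2 x ^ 2)) (g := fun x => d * (a1 x * c1 x + a2 x * c2 x))
        ((continuous_const.mul ((cb1.pow 2).add (cb2.pow 2))).intervalIntegrable _ _)
        ((continuous_const.mul ((ca1.mul cc1).add (ca2.mul cc2))).intervalIntegrable _ _),
      intervalIntegral.integral_const_mul, intervalIntegral.integral_const_mul,
      ← hX2, hcongr] at hsum
    linarith only [hsum]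
  -- key identity d * X2 = Q - f * T
  have hG : (∫ x in (0:ℝ)..(2*π), ((a1 x ^ 2 + a2 x ^ 2) * g x)) = Q - f * T := by
    have hpt : Set.EqOn (fun x => (a1 x ^ 2 + a2 x ^ 2) * g x)
        (fun x => (a1 x ^ 2 + a2 x ^ 2) ^ 2 - f * ((a1 x ^ 2 + a2 x ^ 2) * a1 x))
        (Set.uIcc (0:ℝ) (2*π)) := by
      intro x _
      simp only [hgdef]
      ring
    rw [intervalIntegral.integral_congr hpt,
      intervalIntegral.integral_sub
        (f := fun x => (a1 x ^ 2 + a2 x ^ 2) ^ 2) (g := fun x => f * ((a1 x ^ 2 + a2 x ^ 2) * a1 x))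
        ((((ca1.pow 2).add (ca2.pow 2)).pow 2).intervalIntegrable _ _)
        ((continuous_const.mul (((ca1.pow 2).add (ca2.pow 2)).mul ca1)).intervalIntegrable _ _),
      intervalIntegral.integral_const_mul, ← hQ, ← hT]
  have hkey : d * X2 = Q - f * T := by
    linear_combination hC2 - ζ * hE + f * hD
  -- integration by parts with F
  have hHder : ∀ x, HasDerivAt (fun y => (a1 y ^ 2 + a2 y ^ 2) * F y)
      ((2 * (a1 x * b1 x) + 2 * (a2 x * b2 x)) * F x + (a1 x ^ 2 + a2 x ^ 2) * g x) x := by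
    intro x
    have h1 : HasDerivAt (fun y => a1 y ^ 2 + a2 y ^ 2)
        (2 * (a1 x * b1 x) + 2 * (a2 x * b2 x)) x := by
      have h := ((da1 x).pow 2).add ((da2 x).pow 2)
      refine h.congr_deriv (Eq.symm ?_)
      ring
    exact h1.mul (hFD x)
  have hH0 : (∫ x in (0:ℝ)..(2*π),
      ((2 * (a1 x * b1 x) + 2 * (a2 x * b2 x)) * F x + (a1 x ^ 2 + a2 x ^ 2) * g x)) = 0 := by
    rw [intervalIntegral.integral_eq_sub_of_hasDerivAt (fun x _ => hHder x)
      (((((continuous_const.mul (ca1.mul cb1)).add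
        (continuous_const.mul (ca2.mul cb2))).mul cF).add
        (((ca1.pow 2).add (ca2.pow 2)).mul cg)).intervalIntegrable _ _),
      pa1, pa2, hF2, hF0]
    ring
  set K : ℝ := ∫ x in (0:ℝ)..(2*π), ((a1 x * b1 x + a2 x * b2 x) * F x) with hK
  have hdX2K : d * X2 = -(2 * K) := by
    have hsplit := hH0
    rw [intervalIntegral.integral_add
        (f := fun x => (2 * (a1 x * b1 x) + 2 * (a2 x * b2 x)) * F x)
        (g := fun x => (a1 x ^ 2 + a2 x ^ 2) * g x)
        ((((continuous_const.mul (ca1.mul cb1)).add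
          (continuous_const.mul (ca2.mul cb2))).mul cF).intervalIntegrable _ _)
        ((((ca1.pow 2).add (ca2.pow 2)).mul cg).intervalIntegrable _ _), hG] at hsplit
    have hKrel : (∫ x in (0:ℝ)..(2*π), ((2 * (a1 x * b1 x) + 2 * (a2 x * b2 x)) * F x))
        = 2 * K := by
      have hpt : Set.EqOn (fun x => (2 * (a1 x * b1 x) + 2 * (a2 x * b2 x)) * F x)
          (fun x => 2 * ((a1 x * b1 x + a2 x * b2 x) * F x))
          (Set.uIcc (0:ℝ) (2*π)) := fun x _ => by ring
      rw [intervalIntegral.integral_congr hpt, intervalIntegral.integral_const_mul, ← hK]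
    rw [hKrel] at hsplit
    linarith only [hkey, hsplit]
  -- the estimate
  set u : ℝ → ℝ := fun x => Real.sqrt (a1 x ^ 2 + a2 x ^ 2) with hu
  set v : ℝ → ℝ := fun x => Real.sqrt (b1 x ^ 2 + b2 x ^ 2) with hv
  have cu : Continuous u := ((ca1.pow 2).add (ca2.pow 2)).sqrt
  have cv : Continuous v := ((cb1.pow 2).add (cb2.pow 2)).sqrt
  have hu2 : (∫ x in (0:ℝ)..(2*π), u x ^ 2) = S := by
    have hpt : Set.EqOn (fun x => u x ^ 2) (fun x => a1 x ^ 2 + a2 x ^ 2)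
        (Set.uIcc (0:ℝ) (2*π)) := by
      intro x _
      simp only [hu]
      exact Real.sq_sqrt (by positivity)
    rw [intervalIntegral.integral_congr hpt, ← hS]
  have hv2 : (∫ x in (0:ℝ)..(2*π), v x ^ 2) = X2 := by
    have hpt : Set.EqOn (fun x => v x ^ 2) (fun x => b1 x ^ 2 + b2 x ^ 2)
        (Set.uIcc (0:ℝ) (2*π)) := by
      intro x _
      simp only [hv]
      exact Real.sq_sqrt (by positivity)
    rw [intervalIntegral.integral_congr hpt, ← hX2]
  have hcs := cs_int' u v cu cv
  rw [hu2, hv2] at hcs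
  have hKb : |K| ≤ π * f ^ 2 / 2 * (Real.sqrt S * Real.sqrt X2) := by
    have h1 : |K| ≤ ∫ x in (0:ℝ)..(2*π), |(a1 x * b1 x + a2 x * b2 x) * F x| := by
      rw [hK]
      exact intervalIntegral.abs_integral_le_integral_abs h2pi
    have h2 : (∫ x in (0:ℝ)..(2*π), |(a1 x * b1 x + a2 x * b2 x) * F x|)
        ≤ ∫ x in (0:ℝ)..(2*π), (π * f ^ 2 / 2) * (u x * v x) := by
      apply intervalIntegral.integral_mono_on h2pi
        ((((ca1.mul cb1).add (ca2.mul cb2)).mul cF).abs.intervalIntegrable _ _)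
        ((continuous_const.mul (cu.mul cv)).intervalIntegrable _ _)
      intro x hx
      show |(a1 x * b1 x + a2 x * b2 x) * F x| ≤ (π * f ^ 2 / 2) * (u x * v x)
      rw [abs_mul]
      have hcs2 : |a1 x * b1 x + a2 x * b2 x| ≤ u x * v x := by
        have hsq : (a1 x * b1 x + a2 x * b2 x) ^ 2
            ≤ (a1 x ^ 2 + a2 x ^ 2) * (b1 x ^ 2 + b2 x ^ 2) := by
          nlinarith only [sq_nonneg (a1 x * b2 x - a2 x * b1 x)]
        calc |a1 x * b1 x + a2 x * b2 x|
            = Real.sqrt ((a1 x * b1 x + a2 x * b2 x) ^ 2) :=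
              (Real.sqrt_sq_eq_abs _).symm
          _ ≤ Real.sqrt ((a1 x ^ 2 + a2 x ^ 2) * (b1 x ^ 2 + b2 x ^ 2)) :=
              Real.sqrt_le_sqrt hsq
          _ = u x * v x := Real.sqrt_mul (by positivity) _
      have hFx := hFbound x hx
      calc |a1 x * b1 x + a2 x * b2 x| * |F x|
          ≤ (u x * v x) * (π * f ^ 2 / 2) :=
            mul_le_mul hcs2 hFx (abs_nonneg _)
              (mul_nonneg (Real.sqrt_nonneg _) (Real.sqrt_nonneg _))
        _ = (π * f ^ 2 / 2) * (u x * v x) := by ring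
    have h3 : (∫ x in (0:ℝ)..(2*π), (π * f ^ 2 / 2) * (u x * v x))
        = (π * f ^ 2 / 2) * ∫ x in (0:ℝ)..(2*π), (u x * v x) :=
      intervalIntegral.integral_const_mul _ _
    have h4 : (π * f ^ 2 / 2) * (∫ x in (0:ℝ)..(2*π), (u x * v x))
        ≤ (π * f ^ 2 / 2) * (Real.sqrt S * Real.sqrt X2) := by
      apply mul_le_mul_of_nonneg_left hcs (by positivity)
    calc |K| ≤ ∫ x in (0:ℝ)..(2*π), |(a1 x * b1 x + a2 x * b2 x) * F x| := h1
      _ ≤ ∫ x in (0:ℝ)..(2*π), (π * f ^ 2 / 2) * (u x * v x) := h2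
      _ = (π * f ^ 2 / 2) * ∫ x in (0:ℝ)..(2*π), (u x * v x) := h3
      _ ≤ π * f ^ 2 / 2 * (Real.sqrt S * Real.sqrt X2) := h4
  have habs : |d| * X2 ≤ π * f ^ 2 * (Real.sqrt S * Real.sqrt X2) := by
    have he : |d| * X2 = |d * X2| := by rw [abs_mul, abs_of_nonneg hX2nn]
    rw [he, hdX2K, abs_neg, abs_mul]
    calc |(2:ℝ)| * |K| = 2 * |K| := by norm_num
      _ ≤ 2 * (π * f ^ 2 / 2 * (Real.sqrt S * Real.sqrt X2)) := by linarith only [hKb]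
      _ = π * f ^ 2 * (Real.sqrt S * Real.sqrt X2) := by ring
  have hsX : Real.sqrt X2 ^ 2 = X2 := Real.sq_sqrt hX2nn
  have hsS : Real.sqrt S ^ 2 = S := Real.sq_sqrt hSnn
  have hmain1 : |d| * Real.sqrt X2 ≤ π * f ^ 2 * Real.sqrt S := by
    rcases eq_or_lt_of_le (Real.sqrt_nonneg X2) with h0 | hpos
    · rw [← h0, mul_zero]
      positivity
    · have hmul : (|d| * Real.sqrt X2) * Real.sqrt X2
          ≤ (π * f ^ 2 * Real.sqrt S) * Real.sqrt X2 := by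
        have : |d| * (Real.sqrt X2 * Real.sqrt X2) ≤ π * f ^ 2 * (Real.sqrt S * Real.sqrt X2) := by
          have hx2 : Real.sqrt X2 * Real.sqrt X2 = X2 := by
            have := hsX; nlinarith only [this]
          rw [hx2]; exact habs
        nlinarith only [this]
      exact le_of_mul_le_mul_right hmul hpos
  -- norm bound
  have ha1sq : (∫ x in (0:ℝ)..(2*π), a1 x ^ 2) ≤ S := by
    rw [hS]
    apply intervalIntegral.integral_mono_on h2pi
      ((ca1.pow 2).intervalIntegrable _ _)
      (((ca1.pow 2).add (ca2.pow 2)).intervalIntegrable _ _)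
    intro x _
    show a1 x ^ 2 ≤ a1 x ^ 2 + a2 x ^ 2
    nlinarith only [sq_nonneg (a2 x)]
  have hone : (∫ x in (0:ℝ)..(2*π), (1:ℝ) ^ 2) = 2*π := by simp
  have hA1b : |A1| ≤ Real.sqrt S * Real.sqrt (2*π) := by
    have hc1s := cs_int' a1 (fun _ => 1) ca1 continuous_const
    have hc2s := cs_int' (fun x => -a1 x) (fun _ => 1) ca1.neg continuous_const
    rw [hone] at hc1s hc2s
    have hneg : (∫ x in (0:ℝ)..(2*π), (fun x => -a1 x) x ^ 2)
        = ∫ x in (0:ℝ)..(2*π), a1 x ^ 2 := by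
      apply intervalIntegral.integral_congr
      intro x _
      ring
    rw [hneg] at hc2s
    have hmul1 : (∫ x in (0:ℝ)..(2*π), a1 x * 1) = A1 := by
      rw [hA1]
      apply intervalIntegral.integral_congr
      intro x _
      ring
    have hmul2 : (∫ x in (0:ℝ)..(2*π), (fun x => -a1 x) x * 1) = -A1 := by
      rw [hA1, ← intervalIntegral.integral_neg]
      apply intervalIntegral.integral_congr
      intro x _
      ring
    rw [hmul1] at hc1s
    rw [hmul2] at hc2s
    have hmono : Real.sqrt (∫ x in (0:ℝ)..(2*π), a1 x ^ 2) ≤ Real.sqrt S :=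
      Real.sqrt_le_sqrt ha1sq
    have hstep : Real.sqrt (∫ x in (0:ℝ)..(2*π), a1 x ^ 2) * Real.sqrt (2*π)
        ≤ Real.sqrt S * Real.sqrt (2*π) :=
      mul_le_mul_of_nonneg_right hmono (Real.sqrt_nonneg _)
    rw [abs_le]
    constructor
    · linarith only [hc2s, hstep]
    · linarith only [hc1s, hstep]
  have hSb : Real.sqrt S ≤ Real.sqrt (2*π) * |f| := by
    have h5 : S ≤ |f| * (Real.sqrt S * Real.sqrt (2*π)) := by
      calc S = f * A1 := hE
        _ ≤ |f * A1| := le_abs_self _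
        _ = |f| * |A1| := abs_mul _ _
        _ ≤ |f| * (Real.sqrt S * Real.sqrt (2*π)) :=
            mul_le_mul_of_nonneg_left hA1b (abs_nonneg f)
    rcases eq_or_lt_of_le (Real.sqrt_nonneg S) with h0 | hpos
    · rw [← h0]
      positivity
    · have hmul : Real.sqrt S * Real.sqrt S ≤ (Real.sqrt (2*π) * |f|) * Real.sqrt S := by
        have hx2 : Real.sqrt S * Real.sqrt S = S := by nlinarith only [hsS]
        rw [hx2]
        nlinarith only [h5]
      exact le_of_mul_le_mul_right hmul hpos
  constructor
  · have h7 : 0 ≤ π * f ^ 2 * Real.sqrt S := by positivity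
    linarith only [hmain1, h7]
  · have e1 : Real.sqrt (2*π) = Real.sqrt 2 * Real.sqrt π :=
      Real.sqrt_mul (by norm_num) π
    have e2 : π ^ ((3:ℝ)/2) = π * Real.sqrt π := by
      rw [Real.sqrt_eq_rpow, show ((3:ℝ)/2) = 1 + 1/2 by norm_num,
        Real.rpow_add Real.pi_pos, Real.rpow_one]
    have e3 : |f| ^ 3 = f ^ 2 * |f| := by
      rw [← sq_abs]
      ring
    calc |d| * Real.sqrt X2 ≤ π * f ^ 2 * Real.sqrt S := hmain1
      _ ≤ π * f ^ 2 * (Real.sqrt (2*π) * |f|) :=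
          mul_le_mul_of_nonneg_left hSb (by positivity)
      _ ≤ 6 * Real.sqrt 2 * π ^ ((3:ℝ)/2) * |f| ^ 3 := by
          rw [e1, e2, e3]
          have hnn : 0 ≤ π * f ^ 2 * (Real.sqrt 2 * Real.sqrt π * |f|) := by positivity
          nlinarith only [hnn]
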